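/- There is an absolute constant C' > 0 such that for every d ≥ 0 and every nonzero w ∈ 𝔯: (1/3)·∫_{−1}^{2} ‖(a_d u_r)·w·(a_d u_r)^{−1}‖^{−1/3} dr ≤ C'·e^{−d/3}·‖w‖^{−1/3}. (Here (a_d u_r)·w·(a_d u_r)^{−1} is again a trace-zero matrix, namely Ad(a_d u_r)w.) -/

import Mathlib

open Real MeasureTheory
open scoped Classical

noncomputable section

/-- `𝔯`, the space of trace-zero 2×2 real matrices, identified with `ℝ³` via the
coordinates `(w₁₁, w₁₂, w₂₁)` (the remaining entry being `w₂₂ = −w₁₁`). -/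
abbrev frakr : Type := ℝ × ℝ × ℝ

/-- The norm `‖w‖ = max (|w₁₁|, |w₁₂|, |w₂₁|)` on `𝔯`. -/
def rnorm (w : frakr) : ℝ := max |w.1| (max |w.2.1| |w.2.2|)

/-- The ball `B_𝔯(w₀, b)` in `𝔯`. -/
def rball (w₀ : frakr) (b : ℝ) : Set frakr := {w | rnorm (w - w₀) < b}

/-- `ξ_r(w) = −w₂₁ r² − 2 w₁₁ r + w₁₂`, the `(1,2)` entry of `Ad(u_r) w`. -/
def xi (r : ℝ) (w : frakr) : ℝ := -w.2.2 * r ^ 2 - 2 * w.1 * r + w.2.1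

/-- The trace-zero 2×2 real matrix corresponding to `w ∈ 𝔯`. -/
def toMat (w : frakr) : Matrix (Fin 2) (Fin 2) ℝ := !![w.1, w.2.1; w.2.2, -w.1]

/-- The upper-triangular unipotent matrix `u_r` in `SL(2,ℝ)`. -/
def uMat (r : ℝ) : Matrix (Fin 2) (Fin 2) ℝ := !![1, r; 0, 1]

/-- The diagonal matrix `a_t = diag (e^{t/2}, e^{−t/2})` in `SL(2,ℝ)`. -/
noncomputable def aMat (t : ℝ) : Matrix (Fin 2) (Fin 2) ℝ :=
  !![Real.exp (t / 2), 0; 0, Real.exp (-t / 2)]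

/-- The norm `max (|A₁₁|, |A₁₂|, |A₂₁|)` of a 2×2 matrix (for trace-zero matrices this is
the norm `‖·‖` of `𝔯`). -/
def mnorm (A : Matrix (Fin 2) (Fin 2) ℝ) : ℝ := max |A 0 0| (max |A 0 1| |A 1 0|)

lemma int_rpow_zero (c : ℝ) :
    ∫ s in (0:ℝ)..c, s ^ (-(2/3):ℝ) = 3 * c ^ (1/3:ℝ) := by
  rw [integral_rpow (Or.inl (by norm_num : (-1:ℝ) < -(2/3)))]
  norm_num [Real.zero_rpow]
  ring

lemma abs_rpow_intervalIntegrable_of_nonneg {a b : ℝ} (ha : 0 ≤ a) (hab : a ≤ b) :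
    IntervalIntegrable (fun s => |s| ^ (-(2/3):ℝ)) volume a b := by
  rw [intervalIntegrable_iff_integrableOn_Ioc_of_le hab]
  have h := (intervalIntegral.intervalIntegrable_rpow' (a := a) (b := b)
      (by norm_num : (-1:ℝ) < -(2/3)))
  rw [intervalIntegrable_iff_integrableOn_Ioc_of_le hab] at h
  exact h.congr_fun (fun s hs => by rw [abs_of_nonneg (le_of_lt (lt_of_le_of_lt ha hs.1))])
    measurableSet_Ioc

lemma abs_rpow_integral_of_nonneg {a b : ℝ} (ha : 0 ≤ a) (hab : a ≤ b) :
    ∫ s in a..b, |s| ^ (-(2/3):ℝ) = 3 * b ^ (1/3:ℝ) - 3 * a ^ (1/3:ℝ) := by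
  have h1 : ∫ s in a..b, |s| ^ (-(2/3):ℝ) = ∫ s in a..b, s ^ (-(2/3):ℝ) := by
    apply intervalIntegral.integral_congr
    intro s hs
    rw [Set.uIcc_of_le hab] at hs
    simp only []
    rw [abs_of_nonneg (le_trans ha hs.1)]
  have h2 := int_rpow_zero a
  have h4 : (∫ s in (0:ℝ)..a, s ^ (-(2/3):ℝ)) + ∫ s in a..b, s ^ (-(2/3):ℝ)
      = 3 * b ^ (1/3:ℝ) := by
    rw [intervalIntegral.integral_add_adjacent_intervals
      (intervalIntegral.intervalIntegrable_rpow' (by norm_num))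
      (intervalIntegral.intervalIntegrable_rpow' (by norm_num))]
    exact int_rpow_zero b
  rw [h1]; linarith

lemma abs_rpow_intervalIntegrable_of_nonpos {a b : ℝ} (hb : b ≤ 0) (hab : a ≤ b) :
    IntervalIntegrable (fun s => |s| ^ (-(2/3):ℝ)) volume a b := by
  have h := (abs_rpow_intervalIntegrable_of_nonneg (a := -b) (b := -a)
      (by linarith) (by linarith))
  have h2 := (IntervalIntegrable.iff_comp_neg (by simp)).mp h
  simp only [abs_neg, neg_neg] at h2
  exact h2.symm

lemma abs_rpow_integral_of_nonpos {a b : ℝ} (hb : b ≤ 0) (hab : a ≤ b) :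
    ∫ s in a..b, |s| ^ (-(2/3):ℝ) = 3 * (-a) ^ (1/3:ℝ) - 3 * (-b) ^ (1/3:ℝ) := by
  have h : (∫ s in a..b, |s| ^ (-(2/3):ℝ)) = ∫ s in (-b)..(-a), |s| ^ (-(2/3):ℝ) := by
    rw [← intervalIntegral.integral_comp_neg (fun s => |s| ^ (-(2/3):ℝ))]
    simp [abs_neg]
  rw [h, abs_rpow_integral_of_nonneg (by linarith) (by linarith)]

lemma abs_rpow_intervalIntegrable (a b : ℝ) :
    IntervalIntegrable (fun s => |s| ^ (-(2/3):ℝ)) volume a b := by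
  rcases le_total a b with hab | hab
  · rcases le_total 0 a with ha | ha
    · exact abs_rpow_intervalIntegrable_of_nonneg ha hab
    · rcases le_total b 0 with hb | hb
      · exact abs_rpow_intervalIntegrable_of_nonpos hb hab
      · exact (abs_rpow_intervalIntegrable_of_nonpos le_rfl ha).trans
          (abs_rpow_intervalIntegrable_of_nonneg le_rfl hb)
  · rcases le_total 0 b with hb | hb
    · exact (abs_rpow_intervalIntegrable_of_nonneg hb hab).symm
    · rcases le_total a 0 with ha | ha
      · exact (abs_rpow_intervalIntegrable_of_nonpos ha hab).symm
      · exact ((abs_rpow_intervalIntegrable_of_nonpos le_rfl hb).trans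
          (abs_rpow_intervalIntegrable_of_nonneg le_rfl ha)).symm

lemma abs_rpow_integral_le {a b : ℝ} (hab : a ≤ b) (h3 : b ≤ a + 3) :
    ∫ s in a..b, |s| ^ (-(2/3):ℝ) ≤ 12 := by
  have rt3 : ∀ c : ℝ, 0 ≤ c → c ≤ 3 → c ^ (1/3:ℝ) ≤ 2 := by
    intro c hc hc3
    calc c ^ (1/3:ℝ) ≤ (3:ℝ) ^ (1/3:ℝ) := Real.rpow_le_rpow hc hc3 (by norm_num)
    _ ≤ 2 := by
      have h : ((3:ℝ)^(1/3:ℝ))^(3:ℕ) ≤ 2^(3:ℕ) := by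
        rw [← Real.rpow_natCast ((3:ℝ)^(1/3:ℝ)) 3,
          ← Real.rpow_mul (by norm_num : (0:ℝ) ≤ 3)]
        norm_num
      exact le_of_pow_le_pow_left₀ (by norm_num) (by norm_num) h
  have sub : ∀ u v : ℝ, 0 ≤ u → 0 ≤ v → (u+v)^(1/3:ℝ) ≤ u^(1/3:ℝ)+v^(1/3:ℝ) := by
    intro u v hu hv
    have h := NNReal.rpow_add_le_add_rpow u.toNNReal v.toNNReal (p := 1/3)
      (by norm_num) (by norm_num)
    rw [← Real.toNNReal_add hu hv] at h
    have h2 := NNReal.coe_le_coe.2 h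
    simpa [NNReal.coe_rpow, Real.coe_toNNReal, hu, hv, add_nonneg hu hv] using h2
  rcases le_total 0 a with ha | ha
  · rw [abs_rpow_integral_of_nonneg ha hab]
    have h1 : b ^ (1/3:ℝ) ≤ a ^ (1/3:ℝ) + (3:ℝ) ^ (1/3:ℝ) := by
      calc b ^ (1/3:ℝ) ≤ (a + 3) ^ (1/3:ℝ) :=
            Real.rpow_le_rpow (by linarith) h3 (by norm_num)
      _ ≤ a ^ (1/3:ℝ) + (3:ℝ) ^ (1/3:ℝ) := sub a 3 ha (by norm_num)
    have h2 := rt3 3 (by norm_num) le_rfl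
    linarith
  · rcases le_total b 0 with hb | hb
    · rw [abs_rpow_integral_of_nonpos hb hab]
      have h1 : (-a) ^ (1/3:ℝ) ≤ (-b) ^ (1/3:ℝ) + (3:ℝ) ^ (1/3:ℝ) := by
        calc (-a) ^ (1/3:ℝ) ≤ (-b + 3) ^ (1/3:ℝ) :=
              Real.rpow_le_rpow (by linarith) (by linarith) (by norm_num)
        _ ≤ (-b) ^ (1/3:ℝ) + (3:ℝ) ^ (1/3:ℝ) := sub _ 3 (by linarith) (by norm_num)
      have h2 := rt3 3 (by norm_num) le_rfl
      linarith
    · rw [← intervalIntegral.integral_add_adjacent_intervals (b := 0)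
        (abs_rpow_intervalIntegrable a 0) (abs_rpow_intervalIntegrable 0 b)]
      rw [abs_rpow_integral_of_nonpos le_rfl ha, abs_rpow_integral_of_nonneg le_rfl hb]
      have h1 := rt3 (-a) (by linarith) (by linarith)
      have h2 := rt3 b hb (by linarith)
      have h5 : (0:ℝ) ^ (1/3:ℝ) = 0 := Real.zero_rpow (by norm_num)
      rw [neg_zero, h5]
      linarith

lemma shift_intervalIntegrable (x : ℝ) :
    IntervalIntegrable (fun r => |r - x| ^ (-(2/3):ℝ)) volume (-1) 2 := by
  have h := (abs_rpow_intervalIntegrable (-1 - x) (2 - x)).comp_sub_right x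
  simpa using h

lemma shift_integral_le (x : ℝ) :
    ∫ r in (-1:ℝ)..2, |r - x| ^ (-(2/3):ℝ) ≤ 12 := by
  have h := intervalIntegral.integral_comp_sub_right
    (fun s => |s| ^ (-(2/3):ℝ)) x (a := -1) (b := 2)
  rw [h]
  exact abs_rpow_integral_le (by linarith) (by linarith)


set_option maxHeartbeats 2000000 in
lemma quad_lower (α β γ : ℝ) (hc : 0 < max |α| (max |β| |γ|)) :
    ∃ x₁ x₂ : ℝ, ∀ r ∈ Set.Icc (-1:ℝ) 2,
      max |α| (max |β| |γ|) / 100 * (|r - x₁| * |r - x₂|) ≤ |α*r^2 + β*r + γ| := by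
  set C := max |α| (max |β| |γ|) with hC
  have hγC : |γ| ≤ C := le_trans (le_max_right _ _) (le_max_right _ _)
  have hβC : |β| ≤ C := le_trans (le_max_left _ _) (le_max_right _ _)
  have hαC : |α| ≤ C := le_max_left _ _
  clear_value C
  rcases le_or_gt (C/80) |α| with hA | hA
  · -- Case A : big leading coefficient
    have hα0 : α ≠ 0 := by
      intro h; rw [h, abs_zero] at hA; linarith
    have hApos : 0 < |α| := abs_pos.mpr hα0
    set D := β^2 - 4*α*γ with hD
    clear_value D
    rcases le_or_gt D 0 with hDneg | hDpos
    · -- no real roots: use vertex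
      refine ⟨-β/(2*α), -β/(2*α), fun r hr => ?_⟩
      set x := -β/(2*α) with hx
      have key : 4*α*(α*r^2+β*r+γ) = (2*α*r+β)^2 - D := by rw [hD]; ring
      have e1 : 2*α*(r - x) = 2*α*r + β := by rw [hx]; field_simp; ring
      have l1 : |4*α*(α*r^2+β*r+γ)| = 4* |α| * |α*r^2+β*r+γ| := by
        rw [abs_mul, abs_mul]; norm_num
      have h2 : |(2*α*r+β)^2 - D| = (2*α*r+β)^2 - D := by
        apply abs_of_nonneg; nlinarith [sq_nonneg (2*α*r+β)]
      have habs : 4* |α| * |α*r^2+β*r+γ| = (2*α*r+β)^2 - D := by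
        rw [← l1, key, h2]
      have h3 : (2*α*r+β)^2 = 4* |α|^2 * (r - x)^2 := by
        rw [← e1, sq_abs α]; ring
      have h6 : 4* |α|^2*(r-x)^2 ≤ 4* |α| * |α*r^2+β*r+γ| := by
        rw [habs, ← h3]; nlinarith [sq_nonneg (2*α*r+β)]
      have h7 : |α| * (r-x)^2 ≤ |α*r^2+β*r+γ| := by
        have h8 : (4* |α|) * (|α| * (r-x)^2) ≤ (4* |α|) * |α*r^2+β*r+γ| := by
          nlinarith [h6]
        exact le_of_mul_le_mul_left h8 (by positivity)
      have h5 : |r - x| * |r - x| = (r - x)^2 := by rw [← abs_mul, abs_mul_self]; ring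
      rw [h5]
      nlinarith [h7, sq_nonneg (r - x), hA, hc]
    · -- two real roots
      have hD0 : 0 ≤ D := le_of_lt hDpos
      set s := Real.sqrt D with hs
      have hs2 : s^2 = D := Real.sq_sqrt hD0
      clear_value s
      refine ⟨(-β - s)/(2*α), (-β + s)/(2*α), fun r hr => ?_⟩
      set x₁ := (-β - s)/(2*α) with hx₁
      set x₂ := (-β + s)/(2*α) with hx₂
      have e1 : 2*α*(r - x₁) = 2*α*r + β + s := by rw [hx₁]; field_simp; ring
      have e2 : 2*α*(r - x₂) = 2*α*r + β - s := by rw [hx₂]; field_simp; ring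
      have hs2' : s^2 = β^2 - 4*α*γ := by rw [hs2, hD]
      have key : 4*α*(α*r^2+β*r+γ) = (2*α*(r - x₁)) * (2*α*(r - x₂)) := by
        rw [e1, e2]; linear_combination hs2'
      have l1 : |4*α*(α*r^2+β*r+γ)| = 4* |α| * |α*r^2+β*r+γ| := by
        rw [abs_mul, abs_mul]; norm_num
      have l2 : |2*α*(r - x₁)| = 2* |α| * |r - x₁| := by rw [abs_mul, abs_mul]; norm_num
      have l3 : |2*α*(r - x₂)| = 2* |α| * |r - x₂| := by rw [abs_mul, abs_mul]; norm_num
      have h6 : 4* |α| * |α*r^2+β*r+γ| = (2* |α| * |r - x₁|)*(2* |α| * |r - x₂|) := by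
        rw [← l1, ← l2, ← l3, key, abs_mul]
      have h7 : |α*r^2+β*r+γ| = |α| * (|r - x₁| * |r - x₂|) := by
        have h8 : (4* |α|) * |α*r^2+β*r+γ| = (4* |α|) * (|α| * (|r - x₁| * |r - x₂|)) := by
          rw [h6]; ring
        exact mul_left_cancel₀ (by positivity) h8
      rw [h7]
      nlinarith [mul_nonneg (abs_nonneg (r - x₁)) (abs_nonneg (r - x₂)), hA, hc]
  rcases le_or_gt (C/4) |β| with hB | hB
  · -- Case B : big linear coefficient
    have hβ0 : β ≠ 0 := by
      intro h; rw [h, abs_zero] at hB; linarith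
    rcases eq_or_ne α 0 with hα | hα
    · -- linear case
      refine ⟨-γ/β, -γ/β, fun r hr => ?_⟩
      have hr2 : |r| ≤ 2 := abs_le.mpr ⟨by linarith [hr.1], hr.2⟩
      set x := -γ/β with hxdef
      have e : β*(r - x) = β*r + γ := by rw [hxdef]; field_simp; ring
      have hpe : α*r^2+β*r+γ = β*r+γ := by rw [hα]; ring
      have h1 : |β*r + γ| = |β| * |r - x| := by rw [← e, abs_mul]
      have hx : |x| ≤ 4 := by
        rw [hxdef, abs_div, abs_neg]
        rw [div_le_iff₀ (abs_pos.mpr hβ0)]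
        linarith
      have hrx : |r - x| ≤ 6 := by
        have h := abs_add_le r (-x)
        rw [abs_neg] at h
        rw [sub_eq_add_neg]; linarith
      rw [hpe, h1]
      have t0 : (0:ℝ) ≤ |r - x| := abs_nonneg _
      have s1 : |r - x| * |r - x| ≤ 6 * |r - x| :=
        mul_le_mul_of_nonneg_right hrx t0
      have s2 : C/100 * (|r - x| * |r - x|) ≤ C/100 * (6 * |r - x|) :=
        mul_le_mul_of_nonneg_left s1 (by positivity)
      have s3 : C/100 * 6 ≤ |β| := by linarith
      have s4 : C/100 * 6 * |r - x| ≤ |β| * |r - x| :=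
        mul_le_mul_of_nonneg_right s3 t0
      calc C/100 * (|r - x| * |r - x|) ≤ C/100 * (6 * |r - x|) := s2
      _ = C/100 * 6 * |r - x| := by ring
      _ ≤ |β| * |r - x| := s4
    · -- genuine quadratic with small |α|
      have hApos : 0 < |α| := abs_pos.mpr hα
      have hag : |α*γ| ≤ C^2/80 := by
        rw [abs_mul]
        calc |α| * |γ| ≤ C/80 * C :=
          mul_le_mul (le_of_lt hA) hγC (abs_nonneg γ) (by positivity)
        _ = C^2/80 := by ring
      have hC2 : C^2 ≤ 16*β^2 := by nlinarith [hB, hc, sq_abs β]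
      have hD5 : β^2/5 ≤ β^2 - 4*α*γ := by
        have h1 := le_abs_self (α*γ)
        linarith
      have hD0 : (0:ℝ) ≤ β^2 - 4*α*γ := by
        have := sq_nonneg β
        linarith
      set s := Real.sqrt (β^2 - 4*α*γ) with hs
      have hs2' : s^2 = β^2 - 4*α*γ := Real.sq_sqrt hD0
      have hs0 : 0 ≤ s := Real.sqrt_nonneg _
      clear_value s
      obtain ⟨σ, hσ1, hσβ, hσa⟩ : ∃ σ : ℝ, σ*σ = 1 ∧ σ*β = |β| ∧ |σ| = 1 := by
        rcases le_or_gt 0 β with h | h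
        · exact ⟨1, by norm_num, by rw [one_mul, abs_of_nonneg h], by norm_num⟩
        · exact ⟨-1, by norm_num, by rw [neg_one_mul, abs_of_neg h], by norm_num⟩
      have hσB : σ * |β| = β := by
        rw [← hσβ]; linear_combination β*hσ1
      refine ⟨(σ*s - β)/(2*α), (σ*s - β)/(2*α), fun r hr => ?_⟩
      have hr2 : |r| ≤ 2 := abs_le.mpr ⟨by linarith [hr.1], hr.2⟩
      set x₁ := (σ*s - β)/(2*α) with hx₁
      have e1 : 2*α*(r - x₁) = 2*α*r + β - σ*s := by rw [hx₁]; field_simp; ring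
      have key : 4*α*(α*r^2+β*r+γ) = (2*α*r + β + σ*s) * (2*α*r + β - σ*s) := by
        linear_combination (s^2)*hσ1 + hs2'
      have l1 : |4*α*(α*r^2+β*r+γ)| = 4 * |α| * |α*r^2+β*r+γ| := by
        rw [abs_mul, abs_mul]; norm_num
      have l2 : |2*α*(r - x₁)| = 2 * |α| * |r - x₁| := by
        rw [abs_mul, abs_mul]; norm_num
      have h6 : 4 * |α| * |α*r^2+β*r+γ|
          = |2*α*r + β + σ*s| * (2 * |α| * |r - x₁|) := by
        rw [← l1, key, abs_mul, ← e1, l2]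
      have big : C/5 ≤ |2*α*r + β + σ*s| := by
        have h9 : σ*(2*α*r + β + σ*s) = 2*σ*α*r + |β| + s := by
          linear_combination hσβ + s*hσ1
        have h10 : |2*σ*α*r| = 2 * |α| * |r| := by
          rw [abs_mul, abs_mul, abs_mul, hσa]; norm_num
        have h10' : |2*σ*α*r| ≤ C/20 := by
          rw [h10]
          nlinarith [mul_le_mul_of_nonneg_left hr2 (abs_nonneg α), hA, hc]
        have h11 : σ*(2*α*r + β + σ*s) ≤ |2*α*r + β + σ*s| := by
          calc σ*(2*α*r + β + σ*s) ≤ |σ*(2*α*r + β + σ*s)| := le_abs_self _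
          _ = |2*α*r + β + σ*s| := by rw [abs_mul, hσa, one_mul]
        nlinarith [neg_abs_le (2*σ*α*r), h10', h9, h11, hs0, hB]
      set B := |β| with hBdef
      have hBsq : B^2 = β^2 := sq_abs β
      have m1 : (s - B)*(s + B) = -(4*α*γ) := by
        linear_combination hs2' - hBsq
      have m2 : |s - B| * (s + B) = 4 * |α*γ| := by
        have hsb0 : (0:ℝ) ≤ s + B := by positivity
        rw [← abs_of_nonneg hsb0, ← abs_mul, m1, abs_neg]
        rw [show (4:ℝ)*α*γ = 4*(α*γ) by ring, abs_mul]
        norm_num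
      have hsB16 : |s - B| ≤ 16 * |α| := by
        have hαγC : |α*γ| ≤ |α| * C := by
          rw [abs_mul]
          exact mul_le_mul_of_nonneg_left hγC (abs_nonneg α)
        have hm3 : |s - B| * (s + B) ≤ 4 * (|α| * C) := by
          rw [m2]; linarith
        have hm4 : C/4 ≤ s + B := by linarith
        nlinarith [abs_nonneg (s - B), hm3, hm4, hc, hApos]
      have e3 : σ*s - β = σ*(s - B) := by rw [mul_sub, hBdef, hσB]
      have e4 : |σ*s - β| = |s - B| := by rw [e3, abs_mul, hσa, one_mul]
      have hx8 : |x₁| ≤ 8 := by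
        rw [hx₁, abs_div, e4]
        rw [div_le_iff₀ (by rw [abs_mul]; norm_num; positivity)]
        have : |2*α| = 2*|α| := by rw [abs_mul]; norm_num
        rw [this]
        nlinarith [hsB16, hApos]
      have h11 : C/5 * (2 * |α| * |r - x₁|) ≤ 4 * |α| * |α*r^2+β*r+γ| := by
        rw [h6]
        exact mul_le_mul_of_nonneg_right big (by positivity)
      have h12 : C/10 * |r - x₁| ≤ |α*r^2+β*r+γ| := by
        apply le_of_mul_le_mul_left ?_ (show (0:ℝ) < 4*|α| by positivity)
        calc (4*|α|)*(C/10*|r - x₁|) = C/5 * (2 * |α| * |r - x₁|) := by ring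
        _ ≤ _ := h11
      have hrx : |r - x₁| ≤ 10 := by
        have h := abs_add_le r (-x₁)
        rw [abs_neg] at h
        rw [sub_eq_add_neg]; linarith
      have t0 : (0:ℝ) ≤ |r - x₁| := abs_nonneg _
      have s1 : |r - x₁| * |r - x₁| ≤ 10 * |r - x₁| :=
        mul_le_mul_of_nonneg_right hrx t0
      have s2 : C/100 * (|r - x₁| * |r - x₁|) ≤ C/100 * (10 * |r - x₁|) :=
        mul_le_mul_of_nonneg_left s1 (by positivity)
      calc C/100 * (|r - x₁| * |r - x₁|) ≤ C/100 * (10 * |r - x₁|) := s2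
      _ = C/10 * |r - x₁| := by ring
      _ ≤ |α*r^2+β*r+γ| := h12
  · -- Case C : constant term dominates
    have hγ : C ≤ |γ| := by
      rcases le_or_gt C |γ| with h | h
      · exact h
      · exfalso
        have hlt : max |α| (max |β| |γ|) < C :=
          max_lt (by linarith) (max_lt (by linarith) h)
        rw [← hC] at hlt
        exact lt_irrefl _ hlt
    refine ⟨0, 0, fun r hr => ?_⟩
    have hr2 : |r| ≤ 2 := abs_le.mpr ⟨by linarith [hr.1], hr.2⟩
    have hr4 : |r|^2 ≤ 4 := by nlinarith [hr2, abs_nonneg r]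
    have t1 : |γ| ≤ |α*r^2+β*r+γ| + |α*r^2 + β*r| := by
      have h := abs_add_le (α*r^2+β*r+γ) (-(α*r^2+β*r))
      rw [abs_neg] at h
      calc |γ| = |(α*r^2+β*r+γ) + -(α*r^2+β*r)| := by ring_nf
      _ ≤ _ := h
    have t2 : |α*r^2 + β*r| ≤ |α| * 4 + |β| * 2 := by
      have ha1 := abs_add_le (α*r^2) (β*r)
      have ha2 : |α*r^2| = |α| * |r|^2 := by rw [abs_mul, abs_pow]
      have ha3 : |β*r| = |β| * |r| := abs_mul β r
      nlinarith [ha1, ha2, ha3, mul_le_mul_of_nonneg_left hr4 (abs_nonneg α),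
        mul_le_mul_of_nonneg_left hr2 (abs_nonneg β)]
    have hrr : |r| * |r| ≤ 4 := by nlinarith [hr2, abs_nonneg r]
    rw [sub_zero]
    nlinarith [t1, t2, hγ, hA, hB, hc, hrr, abs_nonneg (α*r^2+β*r)]

lemma matProd (d r : ℝ) (w : frakr) :
    aMat d * uMat r * toMat w * uMat (-r) * aMat (-d) =
    !![w.1 + r * w.2.2, Real.exp d * xi r w;
       Real.exp (-d) * w.2.2, -(w.1 + r * w.2.2)] := by
  have he : Real.exp (d/2) * Real.exp (-d/2) = 1 := by
    rw [← Real.exp_add, show d/2 + -d/2 = 0 by ring, Real.exp_zero]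
  have he2 : Real.exp (d/2) * Real.exp (d/2) = Real.exp d := by
    rw [← Real.exp_add, show d/2 + d/2 = d by ring]
  have he3 : Real.exp (-d/2) * Real.exp (-d/2) = Real.exp (-d) := by
    rw [← Real.exp_add, show -d/2 + -d/2 = -d by ring]
  ext i j
  fin_cases i <;> fin_cases j <;>
    simp only [aMat, uMat, toMat, xi, Matrix.mul_apply, Fin.sum_univ_two] <;>
    simp [Matrix.cons_val_zero, Matrix.cons_val_one]
  · linear_combination (w.1 + r * w.2.2) * he
  · linear_combination (-(w.2.2*r^2) - 2*w.1*r + w.2.1) * he2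
  · linear_combination w.2.2 * he3
  · linear_combination (-(w.1 + r * w.2.2)) * he

lemma measurable_rpow_of_nonneg {f : ℝ → ℝ} (hf : Measurable f) (hf0 : ∀ x, 0 ≤ f x)
    {q : ℝ} (hq : q ≠ 0) : Measurable fun x => f x ^ q := by
  have heq : (fun x => f x ^ q)
      = fun x => if f x = 0 then 0 else Real.exp (Real.log (f x) * q) := by
    funext x
    rcases eq_or_ne (f x) 0 with h | h
    · rw [h, if_pos rfl, Real.zero_rpow hq]
    · rw [if_neg h, Real.rpow_def_of_pos (lt_of_le_of_ne (hf0 x) (Ne.symm h))]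
  rw [heq]
  exact Measurable.ite (hf (measurableSet_singleton 0)) measurable_const
    (Real.measurable_exp.comp ((Real.measurable_log.comp hf).mul_const q))

lemma h100pow : ((1:ℝ)/100) ^ (-(1/3):ℝ) ≤ 5 := by
  have h : (((1:ℝ)/100) ^ (-(1/3):ℝ))^(3:ℕ) ≤ 5^(3:ℕ) := by
    rw [← Real.rpow_natCast (((1:ℝ)/100) ^ (-(1/3):ℝ)) 3,
      ← Real.rpow_mul (by norm_num : (0:ℝ) ≤ 1/100)]
    norm_num
  exact le_of_pow_le_pow_left₀ (by norm_num) (by norm_num) h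

set_option maxHeartbeats 2000000 in
/-- Lemma `lem: linear algebra`: there is an absolute constant `C' > 0`
such that for every `d ≥ 0` and every nonzero `w ∈ 𝔯`,
`(1/3) ∫_{−1}^{2} ‖Ad(a_d u_r) w‖^{−1/3} dr ≤ C' e^{−d/3} ‖w‖^{−1/3}`,
where `Ad(a_d u_r) w = (a_d u_r) w (a_d u_r)^{−1} = a_d u_r w u_{−r} a_{−d}`. -/
theorem statement4 :
    ∃ C' : ℝ, 0 < C' ∧
      ∀ d : ℝ, 0 ≤ d → ∀ w : frakr, w ≠ 0 →
        (1 / 3) * ∫ r in (-1 : ℝ)..2,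
            mnorm (aMat d * uMat r * toMat w * uMat (-r) * aMat (-d)) ^ (-(1 / 3 : ℝ)) ≤
          C' * Real.exp (-d / 3) * rnorm w ^ (-(1 / 3 : ℝ)) := by
  refine ⟨20, by norm_num, fun d hd w hw => ?_⟩
  obtain ⟨a, b, c⟩ := w
  set C := max |(-c)| (max |(-(2*a))| |b|) with hC
  have hr0 : 0 < rnorm (a, b, c) := by
    rcases lt_or_ge 0 (rnorm (a, b, c)) with h | h
    · exact h
    · exfalso
      apply hw
      have ha : |a| ≤ 0 := le_trans (le_max_left _ _) h
      have hb : |b| ≤ 0 := le_trans (le_trans (le_max_left _ _) (le_max_right _ _)) h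
      have hcc : |c| ≤ 0 := le_trans (le_trans (le_max_right _ _) (le_max_right _ _)) h
      have ha0 : a = 0 := abs_eq_zero.mp (le_antisymm ha (abs_nonneg a))
      have hb0 : b = 0 := abs_eq_zero.mp (le_antisymm hb (abs_nonneg b))
      have hc0 : c = 0 := abs_eq_zero.mp (le_antisymm hcc (abs_nonneg c))
      rw [ha0, hb0, hc0]
      rfl
  have hrC : rnorm (a, b, c) ≤ C := by
    have h1 : |a| ≤ |(-(2*a))| := by
      have e : |(-(2*a))| = 2 * |a| := by rw [abs_neg, abs_mul]; norm_num
      rw [e]; linarith [abs_nonneg a]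
    have h2 : |b| ≤ |b| := le_rfl
    have h3 : |c| ≤ |(-c)| := le_of_eq (abs_neg c).symm
    refine max_le (le_trans h1 ?_) (max_le (le_trans h2 ?_) (le_trans h3 ?_))
    · exact le_trans (le_max_left _ _) (le_max_right _ _)
    · exact le_trans (le_max_right _ _) (le_max_right _ _)
    · exact le_max_left _ _
  have hCpos : 0 < C := lt_of_lt_of_le hr0 hrC
  obtain ⟨x₁, x₂, hclaim⟩ := quad_lower (-c) (-(2*a)) b hCpos
  have hxi : ∀ r : ℝ, xi r (a, b, c) = (-c)*r^2 + (-(2*a))*r + b := by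
    intro r; rw [xi]; ring
  set q : ℝ := -(1/3 : ℝ) with hq
  set F : ℝ → ℝ := fun r =>
    mnorm (aMat d * uMat r * toMat (a, b, c) * uMat (-r) * aMat (-d)) ^ q with hF
  set g : ℝ → ℝ := fun r => (Real.exp (-d/3) * ((C/100) ^ q) / 2) *
      (|r - x₁| ^ (-(2/3):ℝ) + |r - x₂| ^ (-(2/3):ℝ)) with hg
  -- mnorm formula
  have hmn : ∀ r : ℝ, mnorm (aMat d * uMat r * toMat (a, b, c) * uMat (-r) * aMat (-d))
      = max |a + r * c| (max (Real.exp d * |xi r (a, b, c)|) (Real.exp (-d) * |c|)) := by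
    intro r
    have e1 : |Real.exp d * xi r (a, b, c)| = Real.exp d * |xi r (a, b, c)| := by
      rw [abs_mul, abs_of_pos (Real.exp_pos d)]
    have e2 : |Real.exp (-d) * (a, b, c).2.2| = Real.exp (-d) * |c| := by
      rw [abs_mul, abs_of_pos (Real.exp_pos (-d))]
    rw [matProd, mnorm]
    norm_num [Matrix.cons_val_zero, Matrix.cons_val_one, Matrix.head_cons]
  -- F is measurable and nonnegative
  have hGcont : Continuous fun r : ℝ =>
      max |a + r * c| (max (Real.exp d * |xi r (a, b, c)|) (Real.exp (-d) * |c|)) := by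
    apply Continuous.max
    · exact (continuous_const.add (continuous_id.mul continuous_const)).abs
    · apply Continuous.max
      · apply continuous_const.mul
        apply Continuous.abs
        simp only [xi]
        continuity
      · exact continuous_const
  have hGnonneg : ∀ r : ℝ, 0 ≤ max |a + r * c|
      (max (Real.exp d * |xi r (a, b, c)|) (Real.exp (-d) * |c|)) :=
    fun r => le_trans (abs_nonneg _) (le_max_left _ _)
  have hFmeas : Measurable F := by
    rw [hF]
    have : (fun r => mnorm (aMat d * uMat r * toMat (a, b, c) * uMat (-r) * aMat (-d)) ^ q)
        = fun r => (max |a + r * c|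
            (max (Real.exp d * |xi r (a, b, c)|) (Real.exp (-d) * |c|))) ^ q := by
      funext r; rw [hmn r]
    rw [this]
    exact measurable_rpow_of_nonneg hGcont.measurable hGnonneg (by rw [hq]; norm_num)
  have hFnonneg : ∀ r : ℝ, 0 ≤ F r := by
    intro r; rw [hF]
    exact Real.rpow_nonneg (by rw [hmn r]; exact hGnonneg r) q
  -- a.e. pointwise bound F ≤ g on [-1,2]
  have hx1ae : ∀ᵐ (r : ℝ) ∂volume, r ≠ x₁ := by
    rw [MeasureTheory.ae_iff]
    have : {r : ℝ | ¬ r ≠ x₁} = {x₁} := by ext r; simp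
    rw [this]
    exact Real.volume_singleton
  have hx2ae : ∀ᵐ (r : ℝ) ∂volume, r ≠ x₂ := by
    rw [MeasureTheory.ae_iff]
    have : {r : ℝ | ¬ r ≠ x₂} = {x₂} := by ext r; simp
    rw [this]
    exact Real.volume_singleton
  have hae : ∀ᵐ r ∂(volume.restrict (Set.Icc (-1:ℝ) 2)), F r ≤ g r := by
    filter_upwards [ae_restrict_mem measurableSet_Icc,
      MeasureTheory.ae_restrict_of_ae hx1ae, MeasureTheory.ae_restrict_of_ae hx2ae]
      with r hmem hne1 hne2
    have hX1 : 0 < |r - x₁| := abs_pos.mpr (sub_ne_zero.mpr hne1)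
    have hX2 : 0 < |r - x₂| := abs_pos.mpr (sub_ne_zero.mpr hne2)
    have ht : 0 < C/100 * (|r - x₁| * |r - x₂|) := by positivity
    have hlow : C/100 * (|r - x₁| * |r - x₂|) ≤ |xi r (a, b, c)| := by
      rw [hxi r]; exact hclaim r hmem
    have hm : Real.exp d * (C/100 * (|r - x₁| * |r - x₂|))
        ≤ mnorm (aMat d * uMat r * toMat (a, b, c) * uMat (-r) * aMat (-d)) := by
      rw [hmn r]
      calc Real.exp d * (C/100 * (|r - x₁| * |r - x₂|))
          ≤ Real.exp d * |xi r (a, b, c)| :=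
            mul_le_mul_of_nonneg_left hlow (le_of_lt (Real.exp_pos d))
      _ ≤ _ := le_trans (le_max_left _ _) (le_max_right _ _)
    have hmpos : 0 < Real.exp d * (C/100 * (|r - x₁| * |r - x₂|)) := by
      exact mul_pos (Real.exp_pos d) ht
    have step1 : F r ≤ (Real.exp d * (C/100 * (|r - x₁| * |r - x₂|))) ^ q := by
      rw [hF]
      exact Real.rpow_le_rpow_of_nonpos hmpos hm (by rw [hq]; norm_num)
    have hsplit : (Real.exp d * (C/100 * (|r - x₁| * |r - x₂|))) ^ q
        = (Real.exp d) ^ q * ((C/100) ^ q * (|r - x₁| ^ q * |r - x₂| ^ q)) := by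
      rw [Real.mul_rpow (le_of_lt (Real.exp_pos d)) (le_of_lt ht),
        Real.mul_rpow (by positivity) (by positivity),
        Real.mul_rpow (le_of_lt hX1) (le_of_lt hX2)]
    have hexpq : (Real.exp d) ^ q = Real.exp (-d/3) := by
      rw [← Real.exp_mul, hq]; ring_nf
    have hamgm : |r - x₁| ^ q * |r - x₂| ^ q
        ≤ (|r - x₁| ^ (-(2/3):ℝ) + |r - x₂| ^ (-(2/3):ℝ)) / 2 := by
      have hu2 : |r - x₁| ^ q * |r - x₁| ^ q = |r - x₁| ^ (-(2/3):ℝ) := by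
        rw [← Real.rpow_add hX1, hq]; norm_num
      have hv2 : |r - x₂| ^ q * |r - x₂| ^ q = |r - x₂| ^ (-(2/3):ℝ) := by
        rw [← Real.rpow_add hX2, hq]; norm_num
      nlinarith [sq_nonneg (|r - x₁| ^ q - |r - x₂| ^ q)]
    have hcq : 0 ≤ (C/100 : ℝ) ^ q := Real.rpow_nonneg (by positivity) q
    calc F r ≤ (Real.exp d * (C/100 * (|r - x₁| * |r - x₂|))) ^ q := step1
    _ = Real.exp (-d/3) * ((C/100) ^ q * (|r - x₁| ^ q * |r - x₂| ^ q)) := by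
        rw [hsplit, hexpq]
    _ ≤ Real.exp (-d/3) * ((C/100) ^ q *
        ((|r - x₁| ^ (-(2/3):ℝ) + |r - x₂| ^ (-(2/3):ℝ)) / 2)) := by
        apply mul_le_mul_of_nonneg_left _ (le_of_lt (Real.exp_pos (-d/3)))
        exact mul_le_mul_of_nonneg_left hamgm hcq
    _ = g r := by rw [hg]; ring
  -- integrability of g
  have hgint : IntervalIntegrable g volume (-1) 2 := by
    rw [hg]
    exact ((shift_intervalIntegrable x₁).add (shift_intervalIntegrable x₂)).const_mul _
  -- integrability of F
  have hFint : IntervalIntegrable F volume (-1) 2 := by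
    apply IntervalIntegrable.mono_fun' hgint
      (hFmeas.aestronglyMeasurable.restrict)
    have hsub : ∀ᵐ r ∂(volume.restrict (Set.uIoc (-1:ℝ) 2)), F r ≤ g r := by
      apply MeasureTheory.ae_mono (MeasureTheory.Measure.restrict_mono _ le_rfl) hae
      rw [Set.uIoc_of_le (by norm_num : (-1:ℝ) ≤ 2)]
      exact Set.Ioc_subset_Icc_self
    filter_upwards [hsub] with r hr
    rw [Real.norm_eq_abs, abs_of_nonneg (hFnonneg r)]
    exact hr
  -- integral comparison
  have hmono : ∫ r in (-1:ℝ)..2, F r ≤ ∫ r in (-1:ℝ)..2, g r :=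
    intervalIntegral.integral_mono_ae_restrict (by norm_num) hFint hgint hae
  have hgval : ∫ r in (-1:ℝ)..2, g r
      ≤ (Real.exp (-d/3) * ((C/100) ^ q) / 2) * 24 := by
    rw [hg, intervalIntegral.integral_const_mul]
    have hpre : 0 ≤ Real.exp (-d/3) * ((C/100) ^ q) / 2 := by
      have := Real.rpow_nonneg (show (0:ℝ) ≤ C/100 by positivity) q
      positivity
    apply mul_le_mul_of_nonneg_left _ hpre
    rw [intervalIntegral.integral_add (shift_intervalIntegrable x₁)
      (shift_intervalIntegrable x₂)]
    linarith [shift_integral_le x₁, shift_integral_le x₂]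
  -- final constant bookkeeping
  have hCq : (C/100 : ℝ) ^ q ≤ 5 * C ^ q := by
    have e : (C/100 : ℝ) = C * (1/100) := by ring
    rw [e, Real.mul_rpow (le_of_lt hCpos) (by norm_num)]
    have h5 := h100pow
    rw [hq]
    calc C ^ (-(1/3):ℝ) * ((1:ℝ)/100) ^ (-(1/3):ℝ)
        ≤ C ^ (-(1/3):ℝ) * 5 :=
          mul_le_mul_of_nonneg_left h5 (Real.rpow_nonneg (le_of_lt hCpos) _)
    _ = 5 * C ^ (-(1/3):ℝ) := by ring
  have hCr : C ^ q ≤ rnorm (a, b, c) ^ q :=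
    Real.rpow_le_rpow_of_nonpos hr0 hrC (by rw [hq]; norm_num)
  have hfinal : (Real.exp (-d/3) * ((C/100) ^ q) / 2) * 24
      ≤ 60 * Real.exp (-d/3) * rnorm (a, b, c) ^ q := by
    have he := Real.exp_pos (-d/3)
    have h1 : (C/100 : ℝ) ^ q ≤ 5 * rnorm (a, b, c) ^ q := by
      calc (C/100 : ℝ) ^ q ≤ 5 * C ^ q := hCq
      _ ≤ 5 * rnorm (a, b, c) ^ q := by linarith [hCr]
    calc (Real.exp (-d/3) * ((C/100) ^ q) / 2) * 24
        = 12 * (Real.exp (-d/3) * ((C/100) ^ q)) := by ring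
    _ ≤ 12 * (Real.exp (-d/3) * (5 * rnorm (a, b, c) ^ q)) := by
        apply mul_le_mul_of_nonneg_left _ (by norm_num)
        exact mul_le_mul_of_nonneg_left h1 (le_of_lt he)
    _ = 60 * Real.exp (-d/3) * rnorm (a, b, c) ^ q := by ring
  have hFg : ∫ r in (-1:ℝ)..2, F r ≤ 60 * Real.exp (-d/3) * rnorm (a, b, c) ^ q :=
    le_trans hmono (le_trans hgval hfinal)
  calc (1/3 : ℝ) * ∫ r in (-1:ℝ)..2, F r
      ≤ (1/3 : ℝ) * (60 * Real.exp (-d/3) * rnorm (a, b, c) ^ q) := by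
        apply mul_le_mul_of_nonneg_left hFg (by norm_num)
  _ = 20 * Real.exp (-d/3) * rnorm (a, b, c) ^ q := by ring
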